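/- Let R be a reduced crystallographic root system in a finite-dimensional real inner product space E with base S and open fundamental Weyl chamber K(S) = {H ∈ E : ⟨α, H⟩ > 0 for all α ∈ S}. Let Σ ⊆ R be a Π-system and suppose H := κ(Σ) = Σ_{β ∈ R(Σ)₊} β* lies in K(S). Then Σ = S(H) = {α ∈ R : ⟨α, H⟩ = 2}; in particular Σ is the unique Π-system of R with κ(Σ) = H. -/

import Mathlib

open scoped RealInnerProductSpace

/-- A reduced crystallographic root system in a real inner product space `E`:
a finite set of nonzero vectors, with integral Cartan numbers, closed under the
reflections it defines, and such that the only multiples of a root `α` that are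
roots are `±α`. -/
def IsRootSystem {E : Type*} [NormedAddCommGroup E] [InnerProductSpace ℝ E]
    (R : Set E) : Prop :=
  R.Finite ∧ (0 : E) ∉ R ∧
  (∀ α ∈ R, ∀ β ∈ R, ∃ n : ℤ, 2 * ⟪β, α⟫ / ⟪α, α⟫ = (n : ℝ)) ∧
  (∀ α ∈ R, ∀ β ∈ R, β - (2 * ⟪β, α⟫ / ⟪α, α⟫) • α ∈ R) ∧
  (∀ α ∈ R, ∀ t : ℝ, t • α ∈ R → t = 1 ∨ t = -1)

/-- `S` is a base (simple system) of the root system `R`: a linearly independent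
subset such that every root is an integer linear combination of elements of `S`
with coefficients all nonnegative or all nonpositive. -/
def IsBase {E : Type*} [NormedAddCommGroup E] [InnerProductSpace ℝ E]
    (R S : Set E) : Prop :=
  S ⊆ R ∧ LinearIndependent ℝ ((↑) : S → E) ∧
  ∀ β ∈ R, ∃ c : E →₀ ℤ, ↑c.support ⊆ S ∧
    β = c.sum (fun α n => (n : ℝ) • α) ∧
    ((∀ α, 0 ≤ c α) ∨ (∀ α, c α ≤ 0))

/-- The reflection `s_β : x ↦ x - (2⟪x,β⟫/⟪β,β⟫) β` in the hyperplane orthogonal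
to `β`, as an element of the monoid `Function.End E` of self-maps of `E`. -/
noncomputable def sRefl {E : Type*} [NormedAddCommGroup E] [InnerProductSpace ℝ E]
    (β : E) : Function.End E :=
  fun x => x - (2 * ⟪x, β⟫ / ⟪β, β⟫) • β

/-- The set of all images of elements of `Sg` under the group generated by the
reflections `s_β`, `β ∈ Sg` (since each reflection is an involution, this group
coincides with the generated monoid of self-maps). -/
noncomputable def subSystem {E : Type*} [NormedAddCommGroup E] [InnerProductSpace ℝ E]
    (Sg : Set E) : Set E :=
  {x | ∃ w ∈ Submonoid.closure (sRefl '' Sg), ∃ α ∈ Sg, x = w α}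

/-- `β` is an integer linear combination of elements of `S'` with all
coefficients nonnegative. -/
def IsNonnegCombo {E : Type*} [NormedAddCommGroup E] [InnerProductSpace ℝ E]
    (S' : Set E) (β : E) : Prop :=
  ∃ c : E →₀ ℤ, ↑c.support ⊆ S' ∧ β = c.sum (fun α n => (n : ℝ) • α) ∧ ∀ α, 0 ≤ c α

/-- The inverse root `α* = 2α/⟪α,α⟫`. -/
noncomputable def invRoot {E : Type*} [NormedAddCommGroup E] [InnerProductSpace ℝ E]
    (α : E) : E :=
  (2 / ⟪α, α⟫) • α
/-- A Π-system of the root system `R`: a linearly independent subset `Sg ⊆ R`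
such that `α - β` is not a root for all `α, β ∈ Sg`. -/
def IsPiSys {E : Type*} [NormedAddCommGroup E] [InnerProductSpace ℝ E]
    (R Sg : Set E) : Prop :=
  Sg ⊆ R ∧ LinearIndependent ℝ ((↑) : Sg → E) ∧ ∀ α ∈ Sg, ∀ β ∈ Sg, α - β ∉ R

section Aux
variable {E : Type*} [NormedAddCommGroup E] [InnerProductSpace ℝ E]

noncomputable def cSum (c : E →₀ ℤ) : E := c.sum (fun α n => (n : ℝ) • α)

lemma cSum_def (c : E →₀ ℤ) : cSum c = c.sum (fun α n => (n : ℝ) • α) := rfl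

lemma cSum_sub (c d : E →₀ ℤ) : cSum (c - d) = cSum c - cSum d := by
  unfold cSum
  apply Finsupp.sum_sub_index
  intro a b₁ b₂
  push_cast
  rw [sub_smul]

lemma cSum_single (β : E) (m : ℤ) : cSum (Finsupp.single β m) = (m : ℝ) • β := by
  unfold cSum
  rw [Finsupp.sum_single_index]
  simp

lemma cSum_zero : cSum (0 : E →₀ ℤ) = 0 := by
  unfold cSum; simp

lemma inner_cSum (x : E) (c : E →₀ ℤ) :
    ⟪x, cSum c⟫ = ∑ β ∈ c.support, (c β : ℝ) * ⟪x, β⟫ := by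
  unfold cSum Finsupp.sum
  rw [inner_sum]
  exact Finset.sum_congr rfl fun β _ => real_inner_smul_right x β _

lemma cSum_inner (x : E) (c : E →₀ ℤ) :
    ⟪cSum c, x⟫ = ∑ β ∈ c.support, (c β : ℝ) * ⟪β, x⟫ := by
  unfold cSum Finsupp.sum
  rw [sum_inner]
  exact Finset.sum_congr rfl fun β _ => real_inner_smul_left β x _

lemma cSum_eq_zero {Sg : Set E} (hli : LinearIndependent ℝ ((↑) : Sg → E))
    {c : E →₀ ℤ} (hsupp : ↑c.support ⊆ Sg) (h : cSum c = 0) : c = 0 := by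
  classical
  set l : E →₀ ℝ := c.mapRange (Int.cast : ℤ → ℝ) Int.cast_zero with hl
  have hls : l ∈ Finsupp.supported ℝ ℝ Sg := by
    intro x hx
    apply hsupp
    exact Finsupp.support_mapRange hx
  have hlc : Finsupp.linearCombination ℝ id l = 0 := by
    rw [Finsupp.linearCombination_apply]
    have : l.sum (fun i a => a • id i) = cSum c := by
      unfold cSum
      apply Finsupp.sum_mapRange_index
      simp
    rw [this, h]
  have hl0 := linearIndepOn_iff.1 (linearIndependent_subtype_iff.1 hli) l hls hlc
  ext a
  have : l a = 0 := by rw [hl0]; rfl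
  rw [hl, Finsupp.mapRange_apply] at this
  exact_mod_cast this

lemma cSum_inj {Sg : Set E} (hli : LinearIndependent ℝ ((↑) : Sg → E))
    {c d : E →₀ ℤ} (hc : ↑c.support ⊆ Sg) (hd : ↑d.support ⊆ Sg)
    (h : cSum c = cSum d) : c = d := by
  classical
  have hsub : ↑(c - d).support ⊆ Sg := by
    refine subset_trans ?_ (Set.union_subset hc hd)
    intro x hx
    have := Finsupp.support_sub (f := c) (g := d) hx
    simpa using this
  have := cSum_eq_zero hli hsub (by rw [cSum_sub, h, sub_self])
  exact sub_eq_zero.1 this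

end Aux

section RS
variable {E : Type*} [NormedAddCommGroup E] [InnerProductSpace ℝ E] {R Sg : Set E} {α β : E}

lemma RS.ne_zero (hR : IsRootSystem R) (h : α ∈ R) : α ≠ 0 :=
  fun e => hR.2.1 (e ▸ h)

lemma RS.inner_self_pos' (h : α ≠ (0:E)) : 0 < ⟪α, α⟫ :=
  lt_of_le_of_ne real_inner_self_nonneg (fun e => h (inner_self_eq_zero.1 e.symm))

lemma RS.inner_self_pos (hR : IsRootSystem R) (h : α ∈ R) : 0 < ⟪α, α⟫ :=
  RS.inner_self_pos' (RS.ne_zero hR h)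

lemma RS.neg_mem (hR : IsRootSystem R) (h : α ∈ R) : -α ∈ R := by
  have hne : ⟪α, α⟫ ≠ 0 := (RS.inner_self_pos hR h).ne'
  have h2 : 2 * ⟪α, α⟫ / ⟪α, α⟫ = (2 : ℝ) := by field_simp
  have := hR.2.2.2.1 α h α h
  rw [h2] at this
  have e : α - (2 : ℝ) • α = -α := by
    rw [two_smul]; abel
  rwa [e] at this

/-- L1: if the inner product of two distinct roots is positive, their difference is a root. -/
lemma RS.sub_mem (hR : IsRootSystem R) (hα : α ∈ R) (hβ : β ∈ R)
    (hne : α ≠ β) (hpos : 0 < ⟪α, β⟫) : α - β ∈ R := by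
  obtain ⟨m, hm⟩ := hR.2.2.1 β hβ α hα
  obtain ⟨m', hm'⟩ := hR.2.2.1 α hα β hβ
  have hββ := RS.inner_self_pos hR hβ
  have hαα := RS.inner_self_pos hR hα
  have hmpos : (0:ℝ) < m := by rw [← hm]; positivity
  have hm'pos : (0:ℝ) < m' := by
    rw [← hm']
    have : 0 < ⟪β, α⟫ := by rwa [real_inner_comm]
    positivity
  by_cases h1 : (m : ℝ) = 1
  · have := hR.2.2.2.1 β hβ α hα
    rwa [hm, h1, one_smul] at this
  · by_cases h2 : (m' : ℝ) = 1
    · have := hR.2.2.2.1 α hα β hβ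
      rw [hm', h2, one_smul] at this
      have := RS.neg_mem hR this
      rwa [neg_sub] at this
    · exfalso
      have hm1 : (1:ℤ) ≤ m := by exact_mod_cast hmpos
      have hm'1 : (1:ℤ) ≤ m' := by exact_mod_cast hm'pos
      have hm2 : (2:ℝ) ≤ m := by
        have : (2:ℤ) ≤ m := by
          rcases lt_or_eq_of_le hm1 with h | h
          · omega
          · exfalso; apply h1; rw [← h]; norm_num
        exact_mod_cast this
      have hm'2 : (2:ℝ) ≤ m' := by
        have : (2:ℤ) ≤ m' := by
          rcases lt_or_eq_of_le hm'1 with h | h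
          · omega
          · exfalso; apply h2; rw [← h]; norm_num
        exact_mod_cast this
      have e1 : 2 * ⟪α, β⟫ = (m : ℝ) * ⟪β, β⟫ := by
        field_simp at hm; linarith [hm]
      have e2 : 2 * ⟪β, α⟫ = (m' : ℝ) * ⟪α, α⟫ := by
        field_simp at hm'; linarith [hm']
      have hcomm : ⟪β, α⟫ = ⟪α, β⟫ := real_inner_comm α β
      have hq : ⟪α - β, α - β⟫ = ⟪α, α⟫ + ⟪β, β⟫ - 2 * ⟪α, β⟫ := by
        rw [inner_sub_sub_self]
        rw [real_inner_comm α β]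
        ring
      have hpos2 : 0 < ⟪α - β, α - β⟫ :=
        RS.inner_self_pos' (sub_ne_zero.2 hne)
      nlinarith
end RS

section SR
variable {E : Type*} [NormedAddCommGroup E] [InnerProductSpace ℝ E] {β x y : E}

lemma sRefl_apply (β x : E) : sRefl β x = x - (2 * ⟪x, β⟫ / ⟪β, β⟫) • β := rfl

lemma inner_self_pos'' (h : β ≠ (0:E)) : 0 < ⟪β, β⟫ :=
  lt_of_le_of_ne real_inner_self_nonneg (fun e => h (inner_self_eq_zero.1 e.symm))

lemma sRefl_self (h : β ≠ 0) : sRefl β β = -β := by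
  have hne : ⟪β, β⟫ ≠ 0 := (inner_self_pos'' h).ne'
  rw [sRefl_apply]
  have h2 : 2 * ⟪β, β⟫ / ⟪β, β⟫ = (2 : ℝ) := by field_simp
  rw [h2, two_smul]
  abel

lemma sRefl_inner_self (h : β ≠ 0) (x : E) : ⟪sRefl β x, β⟫ = -⟪x, β⟫ := by
  have hne : ⟪β, β⟫ ≠ 0 := (inner_self_pos'' h).ne'
  rw [sRefl_apply, inner_sub_left, real_inner_smul_left]
  field_simp
  ring

lemma sRefl_invol (h : β ≠ 0) (x : E) : sRefl β (sRefl β x) = x := by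
  have hne : ⟪β, β⟫ ≠ 0 := (inner_self_pos'' h).ne'
  rw [sRefl_apply (x := sRefl β x), sRefl_inner_self h x, sRefl_apply]
  have : 2 * -⟪x, β⟫ / ⟪β, β⟫ = -(2 * ⟪x, β⟫ / ⟪β, β⟫) := by ring
  rw [this, neg_smul]
  abel

lemma sRefl_isometry (h : β ≠ 0) (x y : E) : ⟪sRefl β x, sRefl β y⟫ = ⟪x, y⟫ := by
  have hne : ⟪β, β⟫ ≠ 0 := (inner_self_pos'' h).ne'
  rw [show sRefl β y = y - (2 * ⟪y, β⟫ / ⟪β, β⟫) • β from rfl, inner_sub_right,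
    real_inner_smul_right, sRefl_inner_self h x, sRefl_apply, inner_sub_left,
    real_inner_smul_left]
  have hc : ⟪β, y⟫ = ⟪y, β⟫ := real_inner_comm y β
  rw [hc]
  field_simp
  ring
end SR

section NoMixed
variable {E : Type*} [NormedAddCommGroup E] [InnerProductSpace ℝ E] {R Sg : Set E} {α β : E}

lemma RS.obtuse (hR : IsRootSystem R) (hSg : IsPiSys R Sg)
    (hα : α ∈ Sg) (hβ : β ∈ Sg) (hne : α ≠ β) : ⟪α, β⟫ ≤ 0 := by
  by_contra hp
  push_neg at hp
  exact hSg.2.2 α hα β hβ (RS.sub_mem hR (hSg.1 hα) (hSg.1 hβ) hne hp)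

lemma cSum_add (c d : E →₀ ℤ) : cSum (c + d) = cSum c + cSum d := by
  unfold cSum
  apply Finsupp.sum_add_index' (by simp)
  intro a b₁ b₂
  push_cast
  rw [add_smul]

lemma T_dec {c : E →₀ ℤ} {β : E} {ε : ℤ} (hε : ε = 1 ∨ ε = -1) (h : 1 ≤ ε * c β) :
    ((c - Finsupp.single β ε).sum fun _ n => n.natAbs) + 1
      = (c.sum fun _ n => n.natAbs) := by
  classical
  have hcβ : c β ≠ 0 := by rcases hε with rfl | rfl <;> omega
  have hβmem : β ∈ c.support := Finsupp.mem_support_iff.2 hcβ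
  have hsub : (c - Finsupp.single β ε).support ⊆ c.support := by
    intro x hx
    rw [Finsupp.mem_support_iff] at hx ⊢
    intro h0
    apply hx
    rw [Finsupp.sub_apply, h0, Finsupp.single_apply]
    by_cases e : β = x
    · exfalso; exact hcβ (e ▸ h0)
    · simp [e]
  rw [Finsupp.sum_of_support_subset _ hsub (fun _ n => n.natAbs) (by intros; rfl)]
  rw [Finsupp.sum]
  rw [← Finset.sum_erase_add _ _ hβmem, ← Finset.sum_erase_add _ (fun x => (c x).natAbs) hβmem]
  have hagree : ∀ x ∈ c.support.erase β,
      ((c - Finsupp.single β ε) x).natAbs = (c x).natAbs := by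
    intro x hx
    have hxβ : x ≠ β := Finset.ne_of_mem_erase hx
    rw [Finsupp.sub_apply, Finsupp.single_apply, if_neg (fun e => hxβ e.symm), sub_zero]
  rw [Finset.sum_congr rfl hagree]
  have hterm : ((c - Finsupp.single β ε) β).natAbs + 1 = (c β).natAbs := by
    rw [Finsupp.sub_apply, Finsupp.single_apply, if_pos rfl]
    rcases hε with rfl | rfl <;> omega
  omega

lemma cross_nonneg (hR : IsRootSystem R) (hSg : IsPiSys R Sg) {a b : E →₀ ℤ}
    (ha : ↑a.support ⊆ Sg) (hb : ↑b.support ⊆ Sg)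
    (hdisj : ∀ x, ¬(x ∈ a.support ∧ x ∈ b.support))
    (han : ∀ x, a x ≤ 0) (hbp : ∀ x, 0 ≤ b x) :
    0 ≤ ⟪cSum a, cSum b⟫ := by
  rw [cSum_inner]
  apply Finset.sum_nonneg
  intro x hx
  have hax : (a x : ℝ) ≤ 0 := by exact_mod_cast han x
  have hxb : ⟪x, cSum b⟫ ≤ 0 := by
    rw [inner_cSum]
    apply Finset.sum_nonpos
    intro y hy
    have hxy : x ≠ y := fun e => hdisj x ⟨hx, e ▸ hy⟩
    have hob := RS.obtuse hR hSg (ha hx) (hb hy) hxy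
    exact mul_nonpos_iff.2 (Or.inl ⟨by exact_mod_cast hbp y, hob⟩)
  exact mul_nonneg_iff.2 (Or.inr ⟨hax, hxb⟩)

lemma exists_term_pos {γ : E} {d : E →₀ ℤ} (h : 0 < ⟪γ, cSum d⟫) :
    ∃ x ∈ d.support, 0 < (d x : ℝ) * ⟪γ, x⟫ := by
  rw [inner_cSum] at h
  by_contra hc
  push_neg at hc
  exact absurd h (not_lt.2 (Finset.sum_nonpos hc))

lemma no_mixed (hR : IsRootSystem R) (hSg : IsPiSys R Sg) :
    ∀ (k : ℕ) (c : E →₀ ℤ), (c.sum fun _ n => n.natAbs) = k → ↑c.support ⊆ Sg →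
      cSum c ∈ R → (∀ x, 0 ≤ c x) ∨ (∀ x, c x ≤ 0) := by
  classical
  intro k
  induction k using Nat.strong_induction_on with
  | _ k ih =>
  intro c hk hsupp hcR
  by_contra hmix
  obtain ⟨hA, hB⟩ := not_or.1 hmix
  push_neg at hA hB
  obtain ⟨β₁, hβ₁⟩ := hA
  obtain ⟨β₂, hβ₂⟩ := hB
  set cp := c.filter (fun x => 0 < c x) with hcp
  set cn := c.filter (fun x => ¬ 0 < c x) with hcn
  have hdecomp : cp + cn = c := Finsupp.filter_pos_add_filter_neg c _
  have hcpsub : cp.support ⊆ c.support := by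
    rw [hcp, Finsupp.support_filter]; exact Finset.filter_subset _ _
  have hcnsub : cn.support ⊆ c.support := by
    rw [hcn, Finsupp.support_filter]; exact Finset.filter_subset _ _
  have hcpsupp : ↑cp.support ⊆ Sg := subset_trans (Finset.coe_subset.2 hcpsub) hsupp
  have hcnsupp : ↑cn.support ⊆ Sg := subset_trans (Finset.coe_subset.2 hcnsub) hsupp
  have hcpx : ∀ x, cp x = if 0 < c x then c x else 0 := by
    intro x; rw [hcp, Finsupp.filter_apply]
  have hcnx : ∀ x, cn x = if 0 < c x then 0 else c x := by
    intro x; rw [hcn, Finsupp.filter_apply]; by_cases h : 0 < c x <;> simp [h]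
  have hcppos : ∀ x, 0 ≤ cp x := by
    intro x; rw [hcpx]; by_cases h : 0 < c x <;> simp [h] <;> omega
  have hcnneg : ∀ x, cn x ≤ 0 := by
    intro x; rw [hcnx]; by_cases h : 0 < c x <;> simp [h] <;> omega
  have hdisj : ∀ x, ¬(x ∈ cn.support ∧ x ∈ cp.support) := by
    rintro x ⟨h1, h2⟩
    have e1 := Finsupp.mem_support_iff.1 h1
    have e2 := Finsupp.mem_support_iff.1 h2
    rw [hcnx] at e1; rw [hcpx] at e2
    by_cases h : 0 < c x <;> simp [h] at e1 e2
  have hdec : cSum c = cSum cp + cSum cn := by rw [← hdecomp, cSum_add]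
  -- step 1 : find β with c β ≥ 1 and ⟪γ, β⟫ > 0
  have hu0 : cSum cp ≠ 0 := by
    intro h0
    have hz := cSum_eq_zero hSg.2.1 hcpsupp h0
    have : cp β₂ = 0 := by rw [hz]; rfl
    rw [hcpx, if_pos hβ₂] at this; omega
  have hinner1 : 0 < ⟪cSum c, cSum cp⟫ := by
    rw [hdec, inner_add_left]
    have h1 : 0 < ⟪cSum cp, cSum cp⟫ := inner_self_pos'' hu0
    have h2 : 0 ≤ ⟪cSum cn, cSum cp⟫ :=
      cross_nonneg hR hSg hcnsupp hcpsupp hdisj hcnneg hcppos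
    linarith
  obtain ⟨β, hβmem, hβterm⟩ := exists_term_pos hinner1
  have hβc : 0 < c β := by
    have h := Finsupp.mem_support_iff.1 hβmem
    rw [hcpx] at h
    by_cases hh : 0 < c β
    · exact hh
    · rw [if_neg hh] at h; exact absurd rfl h
  have hβcp : cp β = c β := by rw [hcpx, if_pos hβc]
  have hγβ : 0 < ⟪cSum c, β⟫ := by
    rw [hβcp] at hβterm
    by_contra hle
    push_neg at hle
    have hcast : (0:ℝ) < (c β : ℝ) := by exact_mod_cast hβc
    nlinarith
  have hβSg : β ∈ Sg := hsupp (hcpsub hβmem)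
  have hsingle_supp : ∀ (b : E) (m : ℤ), b ∈ Sg → ↑(Finsupp.single b m).support ⊆ Sg := by
    intro b m hb x hx
    have := Finsupp.support_single_subset (a := b) (b := m) hx
    simp at this; rwa [this]
  have hγβne : cSum c ≠ β := by
    intro e
    have heq : c = Finsupp.single β 1 := by
      apply cSum_inj hSg.2.1 hsupp (hsingle_supp β 1 hβSg)
      rw [cSum_single, e]; push_cast; rw [one_smul]
    rw [heq, Finsupp.single_apply] at hβ₁
    by_cases h : β = β₁ <;> simp [h] at hβ₁
  have hsub1 : cSum c - β ∈ R := RS.sub_mem hR hcR (hSg.1 hβSg) hγβne hγβ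
  set c' := c - Finsupp.single β 1 with hc'
  have hc'sum : cSum c' = cSum c - β := by
    rw [hc', cSum_sub, cSum_single]; push_cast; rw [one_smul]
  have hc'supp : ↑c'.support ⊆ Sg := by
    intro x hx
    have := Finsupp.support_sub (f := c) (g := Finsupp.single β 1) hx
    rcases Finset.mem_union.1 this with h | h
    · exact hsupp h
    · exact hsingle_supp β 1 hβSg h
  have hT' : (c'.sum fun _ n => n.natAbs) + 1 = k := by
    rw [← hk, hc']; exact T_dec (Or.inl rfl) (by omega)
  have hpure := ih _ (by omega) c' rfl hc'supp (by rw [hc'sum]; exact hsub1)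
  obtain ⟨hcβval, hcrest⟩ : c β = 1 ∧ ∀ x, x ≠ β → c x ≤ 0 := by
    rcases hpure with hp | hn
    · exfalso
      have hne : β₁ ≠ β := fun e => by rw [e] at hβ₁; omega
      have := hp β₁
      rw [hc', Finsupp.sub_apply, Finsupp.single_apply, if_neg (fun e => hne e.symm)] at this
      omega
    · constructor
      · have := hn β
        rw [hc', Finsupp.sub_apply, Finsupp.single_apply, if_pos rfl] at this
        omega
      · intro x hx
        have := hn x
        rw [hc', Finsupp.sub_apply, Finsupp.single_apply, if_neg (fun e => hx e.symm)] at this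
        omega
  -- step 2 : find β' with c β' ≤ -1 and ⟪γ, β'⟫ < 0
  have hv0 : cSum cn ≠ 0 := by
    intro h0
    have hz := cSum_eq_zero hSg.2.1 hcnsupp h0
    have : cn β₁ = 0 := by rw [hz]; rfl
    rw [hcnx, if_neg (by omega)] at this; omega
  have hinner2 : 0 < ⟪cSum c, cSum cn⟫ := by
    rw [hdec, inner_add_left]
    have h1 : 0 < ⟪cSum cn, cSum cn⟫ := inner_self_pos'' hv0
    have h2 : 0 ≤ ⟪cSum cn, cSum cp⟫ :=
      cross_nonneg hR hSg hcnsupp hcpsupp hdisj hcnneg hcppos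
    have h3 : ⟪cSum cp, cSum cn⟫ = ⟪cSum cn, cSum cp⟫ := real_inner_comm _ _
    linarith
  obtain ⟨β', hβ'mem, hβ'term⟩ := exists_term_pos hinner2
  have hβ'c : c β' < 0 := by
    have h := Finsupp.mem_support_iff.1 hβ'mem
    rw [hcnx] at h
    by_cases hh : 0 < c β'
    · rw [if_pos hh] at h; exact absurd rfl h
    · rw [if_neg hh] at h; omega
  have hβ'cn : cn β' = c β' := by rw [hcnx, if_neg (by omega)]
  have hγβ' : ⟪cSum c, β'⟫ < 0 := by
    rw [hβ'cn] at hβ'term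
    by_contra hge
    push_neg at hge
    have hcast : (c β' : ℝ) < 0 := by exact_mod_cast hβ'c
    nlinarith
  have hβ'Sg : β' ∈ Sg := hsupp (hcnsub hβ'mem)
  have hneg : -(cSum c) ∈ R := RS.neg_mem hR hcR
  have hββ' : β ≠ β' := fun e => by rw [← e] at hβ'c; omega
  have hnegne : -(cSum c) ≠ β' := by
    intro e
    have heq : c = Finsupp.single β' (-1) := by
      apply cSum_inj hSg.2.1 hsupp (hsingle_supp β' (-1) hβ'Sg)
      rw [cSum_single]
      push_cast
      rw [neg_one_smul, ← e, neg_neg]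
    have h1 := hcβval
    rw [heq, Finsupp.single_apply, if_neg (fun e2 => hββ' e2.symm)] at h1
    omega
  have hpos' : 0 < ⟪-(cSum c), β'⟫ := by rw [inner_neg_left]; linarith
  have hsub2 : -(cSum c) - β' ∈ R := RS.sub_mem hR hneg (hSg.1 hβ'Sg) hnegne hpos'
  have hsum2 : cSum c + β' ∈ R := by
    have hmem := RS.neg_mem hR hsub2
    have e : -(-(cSum c) - β') = cSum c + β' := by abel
    rwa [e] at hmem
  set c'' := c - Finsupp.single β' (-1) with hc''
  have hc''sum : cSum c'' = cSum c + β' := by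
    rw [hc'', cSum_sub, cSum_single]
    push_cast
    rw [neg_one_smul]
    abel
  have hc''supp : ↑c''.support ⊆ Sg := by
    intro x hx
    have := Finsupp.support_sub (f := c) (g := Finsupp.single β' (-1)) hx
    rcases Finset.mem_union.1 this with h | h
    · exact hsupp h
    · exact hsingle_supp β' (-1) hβ'Sg h
  have hT'' : (c''.sum fun _ n => n.natAbs) + 1 = k := by
    rw [← hk, hc'']; exact T_dec (Or.inr rfl) (by omega)
  have hpure2 := ih _ (by omega) c'' rfl hc''supp (by rw [hc''sum]; exact hsum2)
  rcases hpure2 with hp | hn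
  · -- c = single β 1 - single β' 1, so β - β' ∈ R, contradicting the Π-system property
    have hcβ'val : c β' = -1 := by
      have := hp β'
      rw [hc'', Finsupp.sub_apply, Finsupp.single_apply, if_pos rfl] at this
      omega
    have hrest : ∀ x, x ≠ β → x ≠ β' → c x = 0 := by
      intro x hx hx'
      have h1 := hp x
      rw [hc'', Finsupp.sub_apply, Finsupp.single_apply, if_neg (fun e => hx' e.symm)] at h1
      have h2 := hcrest x hx
      omega
    have hceq : c = Finsupp.single β 1 + Finsupp.single β' (-1) := by
      ext x
      rw [Finsupp.add_apply, Finsupp.single_apply, Finsupp.single_apply]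
      by_cases e1 : β = x
      · rw [if_pos e1, if_neg (fun e2 => hββ' (e1.trans e2.symm))]
        rw [← e1, hcβval]
        norm_num
      · rw [if_neg e1]
        by_cases e2 : β' = x
        · rw [if_pos e2, ← e2, hcβ'val]
          norm_num
        · rw [if_neg e2, hrest x (fun e => e1 e.symm) (fun e => e2 e.symm)]
          norm_num
    have hfin : cSum c = β - β' := by
      rw [hceq, cSum_add, cSum_single, cSum_single]
      push_cast
      rw [one_smul, neg_one_smul]
      abel
    exact hSg.2.2 β hβSg β' hβ'Sg (hfin ▸ hcR)
  · have := hn β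
    rw [hc'', Finsupp.sub_apply, Finsupp.single_apply, if_neg (fun e2 => hββ' e2.symm)] at this
    omega
end NoMixed
section Main
variable {E : Type*} [NormedAddCommGroup E] [InnerProductSpace ℝ E] {R S Sg : Set E} {α β : E}

lemma key_refl (hR : IsRootSystem R) (hSg : IsPiSys R Sg) (hβ : β ∈ Sg) {c : E →₀ ℤ}
    (hcs : ↑c.support ⊆ Sg) (hcn : ∀ x, 0 ≤ c x) (hγR : cSum c ∈ R) (hne : cSum c ≠ β) :
    ∃ m : ℤ, 2 * ⟪cSum c, β⟫ / ⟪β, β⟫ = (m : ℝ) ∧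
      sRefl β (cSum c) ∈ R ∧
      sRefl β (cSum c) = cSum (c - Finsupp.single β m) ∧
      (∀ x, 0 ≤ (c - Finsupp.single β m) x) := by
  classical
  obtain ⟨m, hm⟩ := hR.2.2.1 β (hSg.1 hβ) (cSum c) hγR
  have hβSg : β ∈ Sg := hβ
  have hmemR : sRefl β (cSum c) ∈ R := by
    rw [sRefl_apply]
    exact hR.2.2.2.1 β (hSg.1 hβ) (cSum c) hγR
  have hsingle_supp : ↑(Finsupp.single β m).support ⊆ Sg := by
    intro x hx
    have := Finsupp.support_single_subset (a := β) (b := m) hx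
    simp at this; rwa [this]
  have hrepr : sRefl β (cSum c) = cSum (c - Finsupp.single β m) := by
    rw [cSum_sub, cSum_single, sRefl_apply, hm]
  have hc'supp : ↑(c - Finsupp.single β m).support ⊆ Sg := by
    intro x hx
    rcases Finset.mem_union.1 (Finsupp.support_sub (f := c) (g := Finsupp.single β m) hx) with h | h
    · exact hcs h
    · exact hsingle_supp h
  refine ⟨m, hm, hmemR, hrepr, ?_⟩
  rcases no_mixed hR hSg _ (c - Finsupp.single β m) rfl hc'supp (by rw [← hrepr]; exact hmemR)
    with hp | hn
  · exact hp
  · exfalso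
    have hxz : ∀ x, x ≠ β → c x = 0 := by
      intro x hx
      have := hn x
      rw [Finsupp.sub_apply, Finsupp.single_apply, if_neg (fun e => hx e.symm), sub_zero] at this
      exact le_antisymm this (hcn x)
    have hceq : c = Finsupp.single β (c β) := by
      ext x
      rw [Finsupp.single_apply]
      by_cases e : β = x
      · rw [if_pos e, e]
      · rw [if_neg e, hxz x (fun e2 => e e2.symm)]
    have hγ : cSum c = ((c β : ℝ)) • β := by rw [hceq, cSum_single]; rw [← hceq]
    rcases hR.2.2.2.2 β (hSg.1 hβ) ((c β : ℝ)) (by rw [← hγ]; exact hγR) with h1 | h1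
    · have : c β = 1 := by exact_mod_cast h1
      apply hne
      rw [hγ, this]; push_cast; rw [one_smul]
    · have : c β = -1 := by exact_mod_cast h1
      have := hcn β
      omega

lemma subSystem_subset_R (hR : IsRootSystem R) (hRS : Sg ⊆ R) : subSystem Sg ⊆ R := by
  rintro x ⟨w, hw, α, hα, rfl⟩
  have main : ∀ y ∈ R, w y ∈ R := by
    induction hw using Submonoid.closure_induction with
    | mem g hg =>
      obtain ⟨β, hβ, rfl⟩ := hg
      intro y hy
      exact hR.2.2.2.1 β (hRS hβ) y hy
    | one => intro y hy; exact hy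
    | mul g₁ g₂ hg₁ hg₂ ih₁ ih₂ =>
      intro y hy
      exact ih₁ (g₂ y) (ih₂ y hy)
  exact main α (hRS hα)

lemma mem_subSystem_self (hβ : β ∈ Sg) : β ∈ subSystem Sg :=
  ⟨1, Submonoid.one_mem _, β, hβ, rfl⟩

lemma sRefl_mem_subSystem (hβ : β ∈ Sg) {x : E} (hx : x ∈ subSystem Sg) :
    sRefl β x ∈ subSystem Sg := by
  obtain ⟨w, hw, α, hα, rfl⟩ := hx
  exact ⟨sRefl β * w, mul_mem (Submonoid.subset_closure ⟨β, hβ, rfl⟩) hw, α, hα, rfl⟩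

/-- every root that is a nonnegative combination of the Π-system lies in the subsystem -/
lemma nonneg_root_mem_subSystem (hR : IsRootSystem R) (hSg : IsPiSys R Sg) :
    ∀ (k : ℕ) (c : E →₀ ℤ), ↑c.support ⊆ Sg → (∀ x, 0 ≤ c x) → cSum c ∈ R →
      ((c.sum fun _ n => n).toNat = k) → cSum c ∈ subSystem Sg := by
  classical
  intro k
  induction k using Nat.strong_induction_on with
  | _ k ih =>
  intro c hsupp hcn hcR hk
  by_cases hmem : cSum c ∈ Sg
  · exact mem_subSystem_self hmem
  · -- find β in the support with positive inner product
    have hself : 0 < ⟪cSum c, cSum c⟫ := RS.inner_self_pos hR hcR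
    obtain ⟨β, hβmem, hβterm⟩ := exists_term_pos hself
    have hβc : 0 < c β := lt_of_le_of_ne (hcn β) (Ne.symm (Finsupp.mem_support_iff.1 hβmem))
    have hγβ : 0 < ⟪cSum c, β⟫ := by
      by_contra hle
      push_neg at hle
      have hcast : (0:ℝ) < (c β : ℝ) := by exact_mod_cast hβc
      nlinarith
    have hβSg : β ∈ Sg := hsupp hβmem
    have hne : cSum c ≠ β := fun e => hmem (e ▸ hβSg)
    obtain ⟨m, hm, hmemR, hrepr, hc'nn⟩ := key_refl hR hSg hβSg hsupp hcn hcR hne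
    have hm1 : 1 ≤ m := by
      have : (0:ℝ) < m := by
        rw [← hm]
        have hββ := RS.inner_self_pos hR (hSg.1 hβSg)
        positivity
      exact_mod_cast this
    set c' := c - Finsupp.single β m with hc'
    have hc'supp : ↑c'.support ⊆ Sg := by
      intro x hx
      rcases Finset.mem_union.1 (Finsupp.support_sub (f := c) (g := Finsupp.single β m) hx)
        with h | h
      · exact hsupp h
      · have := Finsupp.support_single_subset (a := β) (b := m) h
        simp at this; rw [this]; exact hβSg
    have hsum' : (c'.sum fun _ n => n) = (c.sum fun _ n => n) - m := by
      rw [hc', Finsupp.sum_sub_index (fun _ _ _ => rfl)]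
      rw [Finsupp.sum_single_index rfl]
    have hnn' : 0 ≤ c'.sum fun _ n => n :=
      Finset.sum_nonneg fun x _ => hc'nn x
    have hnn : 0 ≤ c.sum fun _ n => n :=
      Finset.sum_nonneg fun x _ => hcn x
    have hlt : (c'.sum fun _ n => n).toNat < k := by
      rw [← hk]
      omega
    have hδ : cSum c' ∈ subSystem Sg :=
      ih _ hlt c' hc'supp hc'nn (by rw [← hrepr]; exact hmemR) rfl
    have hβ0 : β ≠ 0 := RS.ne_zero hR (hSg.1 hβSg)
    have : sRefl β (cSum c') ∈ subSystem Sg := sRefl_mem_subSystem hβSg hδ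
    rwa [← hrepr, sRefl_invol hβ0] at this

end Main
section Final
variable {E : Type*} [NormedAddCommGroup E] [InnerProductSpace ℝ E] {R S Sg : Set E} {α β : E}

lemma mem_P_iff (hR : IsRootSystem R) (hSg : IsPiSys R Sg) {P : Finset E}
    (hP : ↑P = {β ∈ subSystem Sg | IsNonnegCombo Sg β}) {x : E} :
    x ∈ P ↔ x ∈ R ∧ IsNonnegCombo Sg x := by
  have hx : x ∈ P ↔ x ∈ subSystem Sg ∧ IsNonnegCombo Sg x := by
    rw [← Finset.mem_coe, hP]; exact Set.mem_sep_iff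
  rw [hx]
  constructor
  · rintro ⟨h1, h2⟩
    exact ⟨subSystem_subset_R hR hSg.1 h1, h2⟩
  · rintro ⟨h1, h2⟩
    obtain ⟨c, hcs, hceq, hcn⟩ := h2
    refine ⟨?_, c, hcs, hceq, hcn⟩
    have hx' : cSum c ∈ R := by rw [cSum_def, ← hceq]; exact h1
    have hmem := nonneg_root_mem_subSystem hR hSg _ c hcs hcn hx' rfl
    rwa [cSum_def, ← hceq] at hmem

lemma inner_H_ne_zero (hR : IsRootSystem R) (hS : IsBase R S) {H : E}
    (hch : ∀ α ∈ S, 0 < ⟪α, H⟫) {ξ : E} (hξ : ξ ∈ R) : ⟪ξ, H⟫ ≠ 0 := by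
  obtain ⟨c, hcs, hceq, hsign⟩ := hS.2.2 ξ hξ
  have hexp : ⟪ξ, H⟫ = ∑ s ∈ c.support, (c s : ℝ) * ⟪s, H⟫ := by
    rw [hceq]; exact cSum_inner H c
  intro h0
  rw [hexp] at h0
  have hsupH : ∀ s ∈ c.support, 0 < ⟪s, H⟫ := fun s hs => hch s (hcs hs)
  have hczero : ∀ s ∈ c.support, c s = 0 := by
    rcases hsign with hp | hn
    · intro s hs
      have hterm : ∀ x ∈ c.support, 0 ≤ (c x : ℝ) * ⟪x, H⟫ := fun x hx =>
        mul_nonneg (by exact_mod_cast hp x) (le_of_lt (hsupH x hx))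
      have hz := (Finset.sum_eq_zero_iff_of_nonneg hterm).1 h0 s hs
      have hpos := hsupH s hs
      have : (c s : ℝ) = 0 := by
        rcases mul_eq_zero.1 hz with h | h
        · exact h
        · exact absurd h hpos.ne'
      exact_mod_cast this
    · intro s hs
      have hterm : ∀ x ∈ c.support, (c x : ℝ) * ⟪x, H⟫ ≤ 0 := fun x hx =>
        mul_nonpos_iff.2 (Or.inr ⟨by exact_mod_cast hn x, le_of_lt (hsupH x hx)⟩)
      have hz := (Finset.sum_eq_zero_iff_of_nonpos hterm).1 h0 s hs
      have hpos := hsupH s hs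
      have : (c s : ℝ) = 0 := by
        rcases mul_eq_zero.1 hz with h | h
        · exact h
        · exact absurd h hpos.ne'
      exact_mod_cast this
  by_cases hempty : c.support = ∅
  · apply hR.2.1
    have hc0 : c = 0 := Finsupp.support_eq_empty.1 hempty
    rw [hceq, hc0] at hξ
    simpa using hξ
  · obtain ⟨s, hs⟩ := Finset.nonempty_iff_ne_empty.2 hempty
    exact (Finsupp.mem_support_iff.1 hs) (hczero s hs)

lemma inner_kappa (hR : IsRootSystem R) (hSg : IsPiSys R Sg) {P : Finset E}
    (hP : ↑P = {β ∈ subSystem Sg | IsNonnegCombo Sg β}) {H : E}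
    (hH : H = ∑ β ∈ P, invRoot β) (hα : α ∈ Sg) : ⟪α, H⟫ = 2 := by
  classical
  have hαR : α ∈ R := hSg.1 hα
  have hα0 : α ≠ 0 := RS.ne_zero hR hαR
  have hαα : 0 < ⟪α, α⟫ := RS.inner_self_pos hR hαR
  have hsingle_supp : ∀ m : ℤ, ↑(Finsupp.single α m).support ⊆ Sg := by
    intro m x hx
    have := Finsupp.support_single_subset (a := α) (b := m) hx
    simp at this; rwa [this]
  have hcombo : IsNonnegCombo Sg α := by
    refine ⟨Finsupp.single α 1, hsingle_supp 1, ?_, ?_⟩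
    · have : cSum (Finsupp.single α 1) = α := by
        rw [cSum_single]; push_cast; rw [one_smul]
      exact this.symm
    · intro x
      rw [Finsupp.single_apply]
      split <;> omega
  have hαP : α ∈ P := (mem_P_iff hR hSg hP).2 ⟨hαR, hcombo⟩
  rw [hH, inner_sum, ← Finset.sum_erase_add _ _ hαP]
  have hfα : ⟪α, invRoot α⟫ = 2 := by
    rw [invRoot, real_inner_smul_right]
    field_simp
  rw [hfα]
  have hzero : ∑ γ ∈ P.erase α, ⟪α, invRoot γ⟫ = 0 := by
    apply Finset.sum_involution (fun γ _ => sRefl α γ)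
    · intro γ hγ
      have hiso := sRefl_isometry hα0 γ γ
      have hneg : ⟪α, sRefl α γ⟫ = -⟪α, γ⟫ := by
        have h1 := sRefl_isometry hα0 α γ
        rw [sRefl_self hα0, inner_neg_left] at h1
        linarith
      rw [invRoot, invRoot, real_inner_smul_right, real_inner_smul_right, hiso, hneg]
      ring
    · intro γ hγ hfne e
      apply hfne
      have hz : (2 * ⟪γ, α⟫ / ⟪α, α⟫) • α = 0 := sub_eq_self.1 (by rw [← sRefl_apply]; exact e)
      have ht : 2 * ⟪γ, α⟫ / ⟪α, α⟫ = 0 := by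
        rcases smul_eq_zero.1 hz with h | h
        · exact h
        · exact absurd h hα0
      have hinner0 : ⟪γ, α⟫ = 0 := by
        rcases div_eq_zero_iff.1 ht with h | h
        · linarith
        · exact absurd h hαα.ne'
      rw [invRoot, real_inner_smul_right, real_inner_comm γ α, hinner0]
      ring
    · intro γ hγ
      rw [Finset.mem_erase] at hγ ⊢
      obtain ⟨hγne, hγP⟩ := hγ
      obtain ⟨hγR, hγcombo⟩ := (mem_P_iff hR hSg hP).1 hγP
      obtain ⟨c, hcs, hceq, hcn⟩ := hγcombo
      have hγc : γ = cSum c := hceq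
      have hcR : cSum c ∈ R := by rw [← hγc]; exact hγR
      have hne2 : cSum c ≠ α := by rw [← hγc]; exact hγne
      obtain ⟨m, hm, hmemR, hrepr, hc'nn⟩ := key_refl hR hSg hα hcs hcn hcR hne2
      have hc'supp : ↑(c - Finsupp.single α m).support ⊆ Sg := by
        intro x hx
        rcases Finset.mem_union.1
          (Finsupp.support_sub (f := c) (g := Finsupp.single α m) hx) with h | h
        · exact hcs h
        · exact hsingle_supp m h
      constructor
      · intro e
        have hγnegα : γ = -α := by
          have h1 : γ = sRefl α (sRefl α γ) := (sRefl_invol hα0 γ).symm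
          rw [e, sRefl_self hα0] at h1
          exact h1
        have hceq2 : c = Finsupp.single α (-1) := by
          apply cSum_inj hSg.2.1 hcs (hsingle_supp (-1))
          rw [cSum_single]
          push_cast
          rw [neg_one_smul, ← hγc, hγnegα]
        have := hcn α
        rw [hceq2, Finsupp.single_apply, if_pos rfl] at this
        omega
      · apply (mem_P_iff hR hSg hP).2
        rw [hγc]
        exact ⟨hmemR, c - Finsupp.single α m, hc'supp, hrepr, hc'nn⟩
    · intro γ hγ
      exact sRefl_invol hα0 γ
  rw [hzero]
  ring

lemma main_eq (hR : IsRootSystem R) (hS : IsBase R S) (hSg : IsPiSys R Sg)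
    {P : Finset E} (hP : ↑P = {β ∈ subSystem Sg | IsNonnegCombo Sg β})
    {H : E} (hH : H = ∑ β ∈ P, invRoot β)
    (hch : ∀ α ∈ S, 0 < ⟪α, H⟫) :
    Sg = {α ∈ R | ⟪α, H⟫ = 2} := by
  ext x
  simp only [Set.mem_setOf_eq, Set.mem_sep_iff]
  constructor
  · intro hx
    exact ⟨hSg.1 hx, inner_kappa hR hSg hP hH hx⟩
  · rintro ⟨hxR, hx2⟩
    by_contra hnot
    have hobtuse : ∀ β ∈ Sg, ⟪x, β⟫ ≤ 0 := by
      intro β hβ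
      by_contra hpos
      push_neg at hpos
      have hne : x ≠ β := fun e => hnot (e ▸ hβ)
      have hsub := RS.sub_mem hR hxR (hSg.1 hβ) hne hpos
      have h2 : ⟪β, H⟫ = 2 := inner_kappa hR hSg hP hH hβ
      apply inner_H_ne_zero hR hS hch hsub
      rw [inner_sub_left, hx2, h2]
      ring
    have hle : ⟪x, H⟫ ≤ 0 := by
      rw [hH, inner_sum]
      apply Finset.sum_nonpos
      intro γ hγ
      obtain ⟨hγR, hγcombo⟩ := (mem_P_iff hR hSg hP).1 hγ
      obtain ⟨c, hcs, hceq, hcn⟩ := hγcombo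
      have hxγ : ⟪x, γ⟫ ≤ 0 := by
        rw [hceq, show ⟪x, (c.sum fun a n => (n:ℝ) • a)⟫ = _ from inner_cSum x c]
        apply Finset.sum_nonpos
        intro y hy
        exact mul_nonpos_iff.2 (Or.inl ⟨by exact_mod_cast hcn y, hobtuse y (hcs hy)⟩)
      rw [invRoot, real_inner_smul_right]
      have hγγ : 0 < ⟪γ, γ⟫ := RS.inner_self_pos hR hγR
      have hpos2 : 0 < 2 / ⟪γ, γ⟫ := by positivity
      exact mul_nonpos_iff.2 (Or.inl ⟨le_of_lt hpos2, hxγ⟩)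
    linarith

end Final


/-- If `Sg` is a Π-system of `R` whose associated vector
`H = κ(Sg) = Σ_{β ∈ R(Sg)₊} β*` lies in the open fundamental Weyl chamber `K(S)`,
then `Sg = S(H) = {α ∈ R : ⟪α, H⟫ = 2}`; in particular `Sg` is the unique
Π-system of `R` with `κ(Sg) = H`. -/
theorem piSystem_eq_SH_of_kappa_in_chamber
    {E : Type*} [NormedAddCommGroup E] [InnerProductSpace ℝ E] [FiniteDimensional ℝ E]
    (R S : Set E) (hR : IsRootSystem R) (hS : IsBase R S)
    (Sg : Set E) (hSg : IsPiSys R Sg)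
    (P : Finset E) (hP : ↑P = {β ∈ subSystem Sg | IsNonnegCombo Sg β})
    (H : E) (hH : H = ∑ β ∈ P, invRoot β)
    (hchamber : ∀ α ∈ S, 0 < ⟪α, H⟫) :
    Sg = {α ∈ R | ⟪α, H⟫ = 2} ∧
    ∀ Sg₂ : Set E, IsPiSys R Sg₂ →
      (∃ P₂ : Finset E, ↑P₂ = {β ∈ subSystem Sg₂ | IsNonnegCombo Sg₂ β} ∧
        ∑ β ∈ P₂, invRoot β = H) →
      Sg₂ = Sg := by
  have h1 := main_eq hR hS hSg hP hH hchamber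
  refine ⟨h1, ?_⟩
  rintro Sg₂ hSg₂ ⟨P₂, hP₂, hH₂⟩
  have h2 := main_eq hR hS hSg₂ hP₂ hH₂.symm hchamber
  rw [h2, h1]
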